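/- The VC dimension of the class of affine halfspace classifiers on ℝ^d (functions of the form x ↦ sign(⟨w, x⟩ + b) with w ∈ ℝ^d, b ∈ ℝ) equals d + 1. That is: (i) there exists a set of d + 1 points in ℝ^d such that for every subset S of these points there exist w ∈ ℝ^d and b ∈ ℝ with ⟨w, x⟩ + b > 0 exactly for the points x in S; and (ii) for every set of d + 2 points in ℝ^d there is a subset S of these points such that no w ∈ ℝ^d and b ∈ ℝ satisfy ⟨w, x⟩ + b > 0 exactly for the points x in S. -/

import Mathlib

open Finset

/-- The VC dimension of affine halfspace classifiers on `ℝ^d` equals `d + 1`: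
(i) some set of `d + 1` points is shattered by affine halfspaces, and
(ii) no set of `d + 2` points is shattered. -/
theorem vc_dimension_affine_halfspaces (d : ℕ) :
    (∃ A : Finset (EuclideanSpace ℝ (Fin d)), A.card = d + 1 ∧
      ∀ S ⊆ A, ∃ (w : EuclideanSpace ℝ (Fin d)) (b : ℝ),
        ∀ x ∈ A, (0 < inner ℝ w x + b ↔ x ∈ S)) ∧
    (∀ A : Finset (EuclideanSpace ℝ (Fin d)), A.card = d + 2 →
      ∃ S ⊆ A, ¬ ∃ (w : EuclideanSpace ℝ (Fin d)) (b : ℝ),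
        ∀ x ∈ A, (0 < inner ℝ w x + b ↔ x ∈ S)) := by
  classical
  set V := EuclideanSpace ℝ (Fin d)
  constructor
  · -- lower bound: 0 together with the standard basis vectors is shattered
    set e : Fin d → V := fun i => EuclideanSpace.single i (1 : ℝ) with he
    have einj : Function.Injective e := by
      intro i j h
      by_contra hij
      have := congrArg (fun v : V => v i) h
      simp [he, EuclideanSpace.single_apply, hij] at this
    have hnz : ∀ i, e i ≠ 0 := by
      intro i h
      have h1 : ‖e i‖ = 1 := by
        rw [he]
        rw [EuclideanSpace.norm_single]
        norm_num
      rw [h] at h1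
      simp at h1
    refine ⟨insert (0 : V) (Finset.univ.image e), ?_, ?_⟩
    · rw [Finset.card_insert_of_notMem (by
        simp only [Finset.mem_image]
        rintro ⟨i, -, h⟩
        exact hnz i h),
        Finset.card_image_of_injective _ einj, Finset.card_univ, Fintype.card_fin]
    · intro S hS
      refine ⟨(WithLp.equiv 2 (Fin d → ℝ)).symm
          (fun i => if e i ∈ S then (1 : ℝ) else -1),
        (if (0 : V) ∈ S then (1 : ℝ)/2 else -(1/2)), ?_⟩
      intro x hx
      rcases Finset.mem_insert.mp hx with rfl | hx
      · simp only [inner_zero_right, zero_add]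
        by_cases h0 : (0 : V) ∈ S <;> simp [h0] <;> norm_num
      · obtain ⟨i, -, rfl⟩ := Finset.mem_image.mp hx
        have hin : (inner ℝ ((WithLp.equiv 2 (Fin d → ℝ)).symm
            (fun i => if e i ∈ S then (1 : ℝ) else -1)) (e i) : ℝ)
            = if e i ∈ S then (1 : ℝ) else -1 := by
          rw [he]
          rw [EuclideanSpace.inner_single_right]
          simp [WithLp.equiv_symm_apply]
        rw [hin]
        by_cases hi : e i ∈ S <;> by_cases h0 : (0 : V) ∈ S <;>
          simp [hi, h0] <;> norm_num
  · -- upper bound: any d+2 points are affinely dependent (Radon-type argument)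
    intro A hA
    have hdep : ¬ AffineIndependent ℝ (fun x : A => (x : V)) := by
      intro hind
      have h1 := hind.card_le_finrank_succ
      have h2 : Module.finrank ℝ (vectorSpan ℝ (Set.range (fun x : A => (x : V))))
          ≤ Module.finrank ℝ V := Submodule.finrank_le _
      have h3 : Module.finrank ℝ V = d := finrank_euclideanSpace_fin
      have h4 : Fintype.card A = d + 2 := by simp [hA]
      omega
    rw [affineIndependent_iff] at hdep
    push_neg at hdep
    obtain ⟨s, c, hsum, hvec, i₀, hi₀s, hi₀⟩ := hdep
    have key : ∀ (g : A → ℝ), (∑ e ∈ s, g e = 0) → (∑ e ∈ s, g e • (e : V) = 0) →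
        (∃ e ∈ s, 0 < g e) →
        ∃ S ⊆ A, ¬ ∃ (w : V) (b : ℝ), ∀ x ∈ A, (0 < inner ℝ w x + b ↔ x ∈ S) := by
      rintro g hgsum hgvec ⟨e₀, he₀s, he₀⟩
      set g' : V → ℝ := fun x =>
        if h : x ∈ A then (if (⟨x, h⟩ : A) ∈ s then g ⟨x, h⟩ else 0) else 0 with hg'
      have hg'val : ∀ e : A, e ∈ s → g' (e : V) = g e := by
        intro e hes
        simp [hg', e.2, hes]
      have hg'zero : ∀ e : A, e ∉ s → g' (e : V) = 0 := by
        intro e hes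
        simp [hg', e.2, hes]
      have hsum' : ∑ x ∈ A, g' x = 0 := by
        calc ∑ x ∈ A, g' x = ∑ e : A, g' (e : V) := (Finset.sum_coe_sort A g').symm
          _ = ∑ e ∈ s, g' (e : V) :=
              (Finset.sum_subset s.subset_univ (fun e _ hes => hg'zero e hes)).symm
          _ = ∑ e ∈ s, g e := Finset.sum_congr rfl (fun e hes => hg'val e hes)
          _ = 0 := hgsum
      have hvec' : ∑ x ∈ A, g' x • x = 0 := by
        calc ∑ x ∈ A, g' x • x = ∑ e : A, g' (e : V) • (e : V) :=
              (Finset.sum_coe_sort A (fun x => g' x • x)).symm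
          _ = ∑ e ∈ s, g' (e : V) • (e : V) :=
              (Finset.sum_subset s.subset_univ (fun e _ hes => by
                rw [hg'zero e hes, zero_smul])).symm
          _ = ∑ e ∈ s, g e • (e : V) :=
              Finset.sum_congr rfl (fun e hes => by rw [hg'val e hes])
          _ = 0 := hgvec
      refine ⟨A.filter (fun x => 0 < g' x), Finset.filter_subset _ _, ?_⟩
      rintro ⟨w, b, hwb⟩
      have hzero : ∑ x ∈ A, g' x * ((inner ℝ w x : ℝ) + b) = 0 := by
        have : ∑ x ∈ A, g' x * ((inner ℝ w x : ℝ) + b)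
            = (inner ℝ w (∑ x ∈ A, g' x • x) : ℝ) + (∑ x ∈ A, g' x) * b := by
          rw [inner_sum, Finset.sum_mul, ← Finset.sum_add_distrib]
          refine Finset.sum_congr rfl (fun x hx => ?_)
          rw [real_inner_smul_right]
          ring
        rw [this, hvec', hsum', inner_zero_right, zero_mul, add_zero]
      have hpos : 0 < ∑ x ∈ A, g' x * ((inner ℝ w x : ℝ) + b) := by
        refine Finset.sum_pos' ?_ ⟨(e₀ : V), e₀.2, ?_⟩
        · intro x hx
          rcases lt_trichotomy (g' x) 0 with hneg | hzero' | hpos'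
          · have hxS : x ∉ A.filter (fun x => 0 < g' x) := by
              simp [Finset.mem_filter]
              intro _
              linarith
            have h1 : ¬ 0 < (inner ℝ w x : ℝ) + b := fun h => hxS ((hwb x hx).mp h)
            have h2 : (inner ℝ w x : ℝ) + b ≤ 0 := not_lt.mp h1
            nlinarith
          · simp [hzero']
          · have hxS : x ∈ A.filter (fun x => 0 < g' x) :=
              Finset.mem_filter.mpr ⟨hx, hpos'⟩
            have := (hwb x hx).mpr hxS
            positivity
        · have hg'e₀ : 0 < g' (e₀ : V) := by rw [hg'val e₀ he₀s]; exact he₀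
          have hS : (e₀ : V) ∈ A.filter (fun x => 0 < g' x) :=
            Finset.mem_filter.mpr ⟨e₀.2, hg'e₀⟩
          have := (hwb (e₀ : V) e₀.2).mpr hS
          positivity
      linarith
    rcases lt_trichotomy (c i₀) 0 with hneg | hz | hpos
    · refine key (fun e => -c e) (by simp [hsum]) ?_ ⟨i₀, hi₀s, by show 0 < -c i₀; linarith⟩
      rw [← neg_zero, ← hvec, ← Finset.sum_neg_distrib]
      exact Finset.sum_congr rfl (fun e _ => by rw [neg_smul])
    · exact absurd hz hi₀
    · exact key c hsum hvec ⟨i₀, hi₀s, hpos⟩
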